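/- Let f : ℝ² → [0,∞) be measurable with f ≤ M pointwise and e := 4π∫f(p)√(1+|p|²)dp < ∞. Then ∫ f(p)/√(1+|p|²) dp ≤ C e^{1/3} with C depending only on M. (Split the integral at radius r = e^{1/3} and use ∫_{|p|<r} (1+|p|²)^{-1/2} dp ≤ 2πr and (1+r²)^{-1}∫_{|p|≥r} f√(1+|p|²)dp ≤ e/r².) -/

import Mathlib

open MeasureTheory Real

noncomputable section

abbrev E2 := EuclideanSpace ℝ (Fin 2)

open Metric Set in

lemma ball_int_le (r : ℝ) (hr : 0 < r) :
    ∫ p in ball (0:E2) r, (Real.sqrt (1 + ‖p‖ ^ 2))⁻¹ ≤ 2 * π * r := by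
  set h : ℝ → ℝ := fun s => if s < r then (Real.sqrt (1 + s ^ 2))⁻¹ else 0 with hh
  have hmh : Measurable h := by
    apply Measurable.ite measurableSet_Iio
    · exact ((continuous_const.add (continuous_pow 2)).sqrt).measurable.inv
    · exact measurable_const
  have h1 : (∫ p in ball (0:E2) r, (Real.sqrt (1 + ‖p‖ ^ 2))⁻¹) = ∫ p : E2, h ‖p‖ := by
    rw [← integral_indicator measurableSet_ball]
    congr 1; funext p
    by_cases hp : p ∈ ball (0:E2) r
    · rw [Set.indicator_of_mem hp, hh]
      simp only [mem_ball_zero_iff] at hp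
      simp [hp]
    · rw [Set.indicator_of_notMem hp, hh]
      simp only [mem_ball_zero_iff, not_lt] at hp
      simp [not_lt.mpr hp]
  have h2 := MeasureTheory.integral_fun_norm_addHaar (volume : Measure E2) h
  have hdim : Module.finrank ℝ E2 = 2 := by simp [finrank_euclideanSpace]
  rw [hdim] at h2
  have hvol : (volume (ball (0:E2) 1)).toReal = π := by
    rw [EuclideanSpace.volume_ball]
    norm_num [Real.sq_sqrt Real.pi_pos.le, Real.Gamma_two, ENNReal.toReal_ofReal Real.pi_pos.le]
  rw [measureReal_def, hvol] at h2
  -- integral over Ioi 0 bound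
  have hbound : (∫ y in Set.Ioi (0:ℝ), y ^ (2 - 1) • h y) ≤ r := by
    have hind : Integrable ((Set.Ioo (0:ℝ) r).indicator (fun _ => (1:ℝ)))
        (volume.restrict (Set.Ioi (0:ℝ))) := by
      rw [integrable_indicator_iff measurableSet_Ioo]
      refine (integrableOn_const_iff).mpr (Or.inr ?_)
      rw [Measure.restrict_apply measurableSet_Ioo]
      exact lt_of_le_of_lt (measure_mono Set.inter_subset_left) (by simp [Real.volume_Ioo])
    have hpt : ∀ y ∈ Set.Ioi (0:ℝ), y ^ (2-1) • h y ≤ (Set.Ioo (0:ℝ) r).indicator (fun _ => (1:ℝ)) y := by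
      intro y hy
      simp only [show 2-1=1 from rfl, pow_one, smul_eq_mul, hh]
      by_cases hyr : y < r
      · rw [Set.indicator_of_mem (Set.mem_Ioo.mpr ⟨hy, hyr⟩)]
        simp only [if_pos hyr]
        rw [mul_inv_le_iff₀ (Real.sqrt_pos.mpr (by positivity)), one_mul]
        calc y = Real.sqrt (y ^ 2) := by rw [Real.sqrt_sq (le_of_lt hy)]
        _ ≤ Real.sqrt (1 + y ^ 2) := Real.sqrt_le_sqrt (by linarith)
      · rw [if_neg hyr, mul_zero]
        exact Set.indicator_nonneg (fun _ _ => zero_le_one) y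
    have hint1 : Integrable (fun y => y ^ (2-1) • h y) (volume.restrict (Set.Ioi (0:ℝ))) := by
      refine hind.mono ((measurable_id.pow_const _).smul hmh).aestronglyMeasurable ?_
      filter_upwards [MeasureTheory.self_mem_ae_restrict measurableSet_Ioi] with y hy
      have h0 : 0 ≤ y ^ (2-1) • h y := by
        simp only [show 2-1=1 from rfl, pow_one, smul_eq_mul, hh]
        by_cases hyr : y < r
        · exact mul_nonneg (le_of_lt hy) (by simp only [if_pos hyr]; positivity)
        · simp [if_neg hyr]
      rw [Real.norm_of_nonneg h0]
      calc y ^ (2-1) • h y ≤ (Set.Ioo (0:ℝ) r).indicator (fun _ => (1:ℝ)) y := hpt y hy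
      _ ≤ ‖(Set.Ioo (0:ℝ) r).indicator (fun _ => (1:ℝ)) y‖ := le_abs_self _
    calc (∫ y in Set.Ioi (0:ℝ), y ^ (2 - 1) • h y)
        ≤ ∫ y in Set.Ioi (0:ℝ), (Set.Ioo (0:ℝ) r).indicator (fun _ => (1:ℝ)) y := by
          refine integral_mono_ae hint1 hind ?_
          filter_upwards [MeasureTheory.self_mem_ae_restrict measurableSet_Ioi] with y hy
          exact hpt y hy
      _ = ∫ y in Set.Ioi (0:ℝ) ∩ Set.Ioo 0 r, (1:ℝ) := setIntegral_indicator measurableSet_Ioo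
      _ = r := by
          rw [Set.inter_eq_self_of_subset_right (fun y hy => hy.1)]
          simp [Real.volume_Ioo, ENNReal.toReal_ofReal hr.le, hr.le]
  rw [h1, h2]
  simp only [nsmul_eq_mul, smul_eq_mul, Nat.cast_ofNat]
  calc (2:ℝ) * (π * ∫ y in Set.Ioi (0:ℝ), y ^ (2 - 1) • h y) ≤ 2 * (π * r) := by
        apply mul_le_mul_of_nonneg_left (mul_le_mul_of_nonneg_left hbound Real.pi_pos.le) (by norm_num)
    _ = 2 * π * r := by ring

open Metric Set in
/-- For bounded nonnegative measurable `f` on momentum space with finite kinetic energy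
`e = 4π∫f√(1+|p|²)dp`, one has `∫ f/√(1+|p|²) dp ≤ C e^{1/3}` with `C` depending
only on the bound `M`. -/
theorem integral_div_sqrt_le_energy_pow (M : ℝ) (hM : 0 ≤ M) :
    ∃ C : ℝ, 0 < C ∧ ∀ f : E2 → ℝ, Measurable f → (∀ p, 0 ≤ f p) → (∀ p, f p ≤ M) →
      (Integrable fun p => f p * Real.sqrt (1 + ‖p‖ ^ 2)) →
      (∫ p, f p / Real.sqrt (1 + ‖p‖ ^ 2))
        ≤ C * (4 * π * ∫ p, f p * Real.sqrt (1 + ‖p‖ ^ 2)) ^ ((1:ℝ)/3) := by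
  have hpi := Real.pi_pos
  refine ⟨2 * π * M + 1 / (4 * π), by positivity, ?_⟩
  intro f hf hf0 hfM hint
  have hsq : ∀ p : E2, (1:ℝ) ≤ Real.sqrt (1 + ‖p‖ ^ 2) := fun p =>
    Real.one_le_sqrt.mpr (le_add_of_nonneg_right (sq_nonneg _))
  have hsqpos : ∀ p : E2, 0 < Real.sqrt (1 + ‖p‖ ^ 2) := fun p =>
    lt_of_lt_of_le one_pos (hsq p)
  have hmeas_s : Measurable fun p : E2 => Real.sqrt (1 + ‖p‖ ^ 2) :=
    ((continuous_const.add (continuous_norm.pow 2)).sqrt).measurable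
  have hptdm : ∀ p : E2, f p / Real.sqrt (1 + ‖p‖ ^ 2) ≤ f p * Real.sqrt (1 + ‖p‖ ^ 2) :=
    fun p => (div_le_self (hf0 p) (hsq p)).trans (le_mul_of_one_le_right (hf0 p) (hsq p))
  have hI1 : Integrable fun p : E2 => f p / Real.sqrt (1 + ‖p‖ ^ 2) := by
    refine hint.mono (hf.div hmeas_s).aestronglyMeasurable
      (Filter.Eventually.of_forall fun p => ?_)
    rw [Real.norm_of_nonneg (div_nonneg (hf0 p) (hsqpos p).le),
      Real.norm_of_nonneg (mul_nonneg (hf0 p) (hsqpos p).le)]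
    exact hptdm p
  set I := ∫ p, f p * Real.sqrt (1 + ‖p‖ ^ 2) with hIdef
  have hI0 : 0 ≤ I := integral_nonneg fun p => mul_nonneg (hf0 p) (hsqpos p).le
  rcases eq_or_lt_of_le hI0 with h0 | hIpos
  · have hle : (∫ p, f p / Real.sqrt (1 + ‖p‖ ^ 2)) ≤ I :=
      integral_mono hI1 hint hptdm
    rw [← h0] at hle ⊢
    rw [mul_zero, Real.zero_rpow (by norm_num), mul_zero]
    exact hle
  -- main case
  set e := 4 * π * I with hedef
  have he : 0 < e := by positivity
  set r := e ^ ((1:ℝ)/3) with hrdef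
  have hr : 0 < r := Real.rpow_pos_of_pos he _
  have hr2 : r ^ 2 = e ^ ((2:ℝ)/3) := by
    rw [hrdef, ← Real.rpow_natCast (e ^ ((1:ℝ)/3)) 2, ← Real.rpow_mul he.le]
    norm_num
  have hr3 : r ^ 3 = e := by
    rw [hrdef, ← Real.rpow_natCast (e ^ ((1:ℝ)/3)) 3, ← Real.rpow_mul he.le]
    norm_num
  have hIr2 : I / r ^ 2 = r / (4 * π) := by
    rw [div_eq_div_iff (by positivity) (by positivity)]
    calc I * (4 * π) = e := by rw [hedef]; ring
      _ = r ^ 3 := hr3.symm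
      _ = r * r ^ 2 := by ring
  set g : E2 → ℝ := fun p =>
    (ball (0:E2) r).indicator (fun p => M / Real.sqrt (1 + ‖p‖ ^ 2)) p
      + f p * Real.sqrt (1 + ‖p‖ ^ 2) / r ^ 2 with hgdef
  have hpt : ∀ p, f p / Real.sqrt (1 + ‖p‖ ^ 2) ≤ g p := by
    intro p
    simp only [hgdef]
    by_cases hp : p ∈ ball (0:E2) r
    · rw [Set.indicator_of_mem hp]
      have h1 : f p / Real.sqrt (1 + ‖p‖ ^ 2) ≤ M / Real.sqrt (1 + ‖p‖ ^ 2) :=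
        (div_le_div_iff_of_pos_right (hsqpos p)).mpr (hfM p)
      have h2 : 0 ≤ f p * Real.sqrt (1 + ‖p‖ ^ 2) / r ^ 2 :=
        div_nonneg (mul_nonneg (hf0 p) (hsqpos p).le) (sq_nonneg r)
      linarith
    · rw [Set.indicator_of_notMem hp, zero_add]
      rw [mem_ball_zero_iff, not_lt] at hp
      rw [div_le_div_iff₀ (hsqpos p) (by positivity)]
      have hss : Real.sqrt (1 + ‖p‖ ^ 2) * Real.sqrt (1 + ‖p‖ ^ 2) = 1 + ‖p‖ ^ 2 :=
        Real.mul_self_sqrt (by positivity)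
      have hrp : r ^ 2 ≤ ‖p‖ ^ 2 := by nlinarith [hr.le]
      nlinarith [mul_nonneg (hf0 p) (sub_nonneg.mpr hrp), hf0 p]
  -- integrability of g pieces
  have hind_meas : Measurable fun p : E2 => M / Real.sqrt (1 + ‖p‖ ^ 2) :=
    measurable_const.div hmeas_s
  have hind : Integrable ((ball (0:E2) r).indicator (fun p => M / Real.sqrt (1 + ‖p‖ ^ 2))) := by
    rw [integrable_indicator_iff measurableSet_ball]
    refine Measure.integrableOn_of_bounded (measure_ball_lt_top).ne
      hind_meas.aestronglyMeasurable (M := M) ?_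
    filter_upwards with p
    rw [Real.norm_of_nonneg (div_nonneg hM (hsqpos p).le)]
    exact (div_le_self hM (hsq p))
  have htail : Integrable fun p : E2 => f p * Real.sqrt (1 + ‖p‖ ^ 2) / r ^ 2 := hint.div_const _
  have hg_int : Integrable g := hind.add htail
  have step1 : (∫ p, f p / Real.sqrt (1 + ‖p‖ ^ 2)) ≤ ∫ p, g p :=
    integral_mono hI1 hg_int hpt
  have step2 : (∫ p, g p)
      = (∫ p in ball (0:E2) r, M / Real.sqrt (1 + ‖p‖ ^ 2)) + I / r ^ 2 := by
    simp only [hgdef]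
    rw [integral_add hind htail, integral_indicator measurableSet_ball,
      integral_div]
  have step3 : (∫ p in ball (0:E2) r, M / Real.sqrt (1 + ‖p‖ ^ 2)) ≤ M * (2 * π * r) := by
    have : (∫ p in ball (0:E2) r, M / Real.sqrt (1 + ‖p‖ ^ 2))
        = M * ∫ p in ball (0:E2) r, (Real.sqrt (1 + ‖p‖ ^ 2))⁻¹ := by
      simp_rw [div_eq_mul_inv]
      exact integral_const_mul M _
    rw [this]
    exact mul_le_mul_of_nonneg_left (ball_int_le r hr) hM
  calc (∫ p, f p / Real.sqrt (1 + ‖p‖ ^ 2)) ≤ ∫ p, g p := step1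
    _ = (∫ p in ball (0:E2) r, M / Real.sqrt (1 + ‖p‖ ^ 2)) + I / r ^ 2 := step2
    _ ≤ M * (2 * π * r) + r / (4 * π) := by rw [hIr2]; linarith
    _ = (2 * π * M + 1 / (4 * π)) * r := by field_simp
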